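/- Let Γ, Λ be finite dimensional algebras and X a Γ-Λ-bimodule that is projective as a left Γ-module and has finite projective dimension as a right Λ-module. If P^• is an exact (acyclic) complex of projective left Λ-modules, then the complex X ⊗_Λ P^• is exact, and each term X ⊗_Λ P^i is a projective left Γ-module. -/

import Mathlib

noncomputable section

open scoped TensorProduct
open MulOpposite

section BTensorCore

variable (B : Type) [Ring B]

/-- The balancing relations for the tensor product over `B` of a right `B`-module `M`
and a left `B`-module `N`. -/
def BTrel (M N : Type) [AddCommGroup M] [AddCommGroup N] [Module Bᵐᵒᵖ M] [Module B N] :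
    Submodule ℤ (TensorProduct ℤ M N) :=
  Submodule.span ℤ {x | ∃ (m : M) (b : B) (n : N),
    x = (op b • m) ⊗ₜ[ℤ] n - m ⊗ₜ[ℤ] (b • n)}

/-- The balanced tensor product `M ⊗_B N` of a right `B`-module `M` and a left `B`-module `N`,
realized as a quotient of the tensor product of abelian groups. -/
def BTensor (M N : Type) [AddCommGroup M] [AddCommGroup N] [Module Bᵐᵒᵖ M] [Module B N] : Type :=
  TensorProduct ℤ M N ⧸ BTrel B M N

instance (M N : Type) [AddCommGroup M] [AddCommGroup N] [Module Bᵐᵒᵖ M] [Module B N] :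
    AddCommGroup (BTensor B M N) :=
  inferInstanceAs (AddCommGroup (TensorProduct ℤ M N ⧸ BTrel B M N))

variable {M N : Type} [AddCommGroup M] [AddCommGroup N] [Module Bᵐᵒᵖ M] [Module B N]

/-- The class of `m ⊗ n` in `M ⊗_B N`. -/
def BTensor.tmul (m : M) (n : N) : BTensor B M N :=
  Submodule.Quotient.mk (m ⊗ₜ[ℤ] n)

/-- Functoriality of `M ⊗_B -` in the second (left-module) variable. -/
def BTensor.map₂ (Mfix : Type) [AddCommGroup Mfix] [Module Bᵐᵒᵖ Mfix]
    {N' : Type} [AddCommGroup N'] [Module B N'] (f : N →ₗ[B] N') :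
    BTensor B Mfix N →ₗ[ℤ] BTensor B Mfix N' :=
  Submodule.mapQ _ _ (TensorProduct.map LinearMap.id f.toAddMonoidHom.toIntLinearMap) (by
    rw [BTrel, Submodule.span_le]
    rintro x ⟨m, b, n, rfl⟩
    simp only [SetLike.mem_coe, Submodule.mem_comap, map_sub, TensorProduct.map_tmul,
      LinearMap.id_coe, id_eq, AddMonoidHom.coe_toIntLinearMap, LinearMap.toAddMonoidHom_coe]
    show (op b • m) ⊗ₜ[ℤ] f n - m ⊗ₜ[ℤ] f (b • n) ∈ BTrel B Mfix N'
    rw [map_smul]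
    exact Submodule.subset_span ⟨m, b, f n, rfl⟩)

/-- Functoriality of `- ⊗_B N` in the first (right-module) variable. -/
def BTensor.map₁ (Nfix : Type) [AddCommGroup Nfix] [Module B Nfix]
    {M' : Type} [AddCommGroup M'] [Module Bᵐᵒᵖ M'] (g : M →ₗ[Bᵐᵒᵖ] M') :
    BTensor B M Nfix →ₗ[ℤ] BTensor B M' Nfix :=
  Submodule.mapQ _ _ (TensorProduct.map g.toAddMonoidHom.toIntLinearMap LinearMap.id) (by
    rw [BTrel, Submodule.span_le]
    rintro x ⟨m, b, n, rfl⟩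
    simp only [SetLike.mem_coe, Submodule.mem_comap, map_sub, TensorProduct.map_tmul,
      LinearMap.id_coe, id_eq, AddMonoidHom.coe_toIntLinearMap, LinearMap.toAddMonoidHom_coe]
    show TensorProduct.map g.toAddMonoidHom.toIntLinearMap LinearMap.id
      ((op b • m) ⊗ₜ[ℤ] n - m ⊗ₜ[ℤ] (b • n)) ∈ BTrel B M' Nfix
    rw [map_sub, TensorProduct.map_tmul, TensorProduct.map_tmul]
    show g (op b • m) ⊗ₜ[ℤ] n - g m ⊗ₜ[ℤ] (b • n) ∈ BTrel B M' Nfix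
    rw [map_smul]
    exact Submodule.subset_span ⟨g m, b, n, rfl⟩)

theorem BTensor.map₂_mk (Mfix : Type) [AddCommGroup Mfix] [Module Bᵐᵒᵖ Mfix]
    {N' : Type} [AddCommGroup N'] [Module B N'] (f : N →ₗ[B] N') (y : Mfix ⊗[ℤ] N) :
    BTensor.map₂ B Mfix f (Submodule.Quotient.mk y) =
      Submodule.Quotient.mk
        (TensorProduct.map LinearMap.id f.toAddMonoidHom.toIntLinearMap y) :=
  by rfl

theorem BTensor.map₁_mk (Nfix : Type) [AddCommGroup Nfix] [Module B Nfix]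
    {M' : Type} [AddCommGroup M'] [Module Bᵐᵒᵖ M'] (g : M →ₗ[Bᵐᵒᵖ] M') (y : M ⊗[ℤ] Nfix) :
    BTensor.map₁ B Nfix g (Submodule.Quotient.mk y) =
      Submodule.Quotient.mk
        (TensorProduct.map g.toAddMonoidHom.toIntLinearMap LinearMap.id y) :=
  by rfl

end BTensorCore

section LeftRight

variable (B : Type) [Ring B] (Γ : Type) [Ring Γ]
variable (M N : Type) [AddCommGroup M] [AddCommGroup N] [Module Bᵐᵒᵖ M] [Module B N]

section Left
variable [Module Γ M] [SMulCommClass Γ Bᵐᵒᵖ M]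

/-- left scalar multiplication on `M`, as a right-`B`-linear map. -/
def lsmulRightLinear (g : Γ) : M →ₗ[Bᵐᵒᵖ] M where
  toFun := (g • ·)
  map_add' := smul_add g
  map_smul' := fun b m => by exact smul_comm g b m

instance BTensor.instSMulLeft : SMul Γ (BTensor B M N) :=
  ⟨fun g => BTensor.map₁ B N (lsmulRightLinear B Γ M g)⟩

instance BTensor.leftModule : Module Γ (BTensor B M N) := by
  refine Function.Surjective.module Γ
    (⟨⟨(Submodule.Quotient.mk : TensorProduct ℤ M N → BTensor B M N), rfl⟩, fun x y => rfl⟩)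
    (Submodule.Quotient.mk_surjective _) ?_
  intro g y
  show Submodule.Quotient.mk (g • y) = BTensor.map₁ B N (lsmulRightLinear B Γ M g)
    (Submodule.Quotient.mk y)
  rw [BTensor.map₁_mk]
  congr 1

end Left

section Right
variable [Module Γᵐᵒᵖ N] [SMulCommClass B Γᵐᵒᵖ N]

/-- right scalar multiplication on `N`, as a left-`B`-linear map. -/
def rsmulLeftLinear (g : Γᵐᵒᵖ) : N →ₗ[B] N where
  toFun := (g • ·)
  map_add' := smul_add g
  map_smul' := fun b n => by exact (smul_comm b g n).symm

instance BTensor.instSMulRight : SMul Γᵐᵒᵖ (BTensor B M N) :=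
  ⟨fun g => BTensor.map₂ B M (rsmulLeftLinear B Γ N g)⟩

instance BTensor.rightModule : Module Γᵐᵒᵖ (BTensor B M N) := by
  refine Function.Surjective.module Γᵐᵒᵖ
    (⟨⟨fun (y : N ⊗[ℤ] M) => (Submodule.Quotient.mk (TensorProduct.comm ℤ N M y) :
        BTensor B M N), by simp; rfl⟩, fun x y => by simp; rfl⟩) ?_ ?_
  · intro x
    obtain ⟨y, rfl⟩ := Submodule.Quotient.mk_surjective _ x
    exact ⟨(TensorProduct.comm ℤ N M).symm y, by
      show Submodule.Quotient.mk (TensorProduct.comm ℤ N M ((TensorProduct.comm ℤ N M).symm y)) = _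
      rw [LinearEquiv.apply_symm_apply]⟩
  · intro g y
    show Submodule.Quotient.mk ((TensorProduct.comm ℤ N M) (g • y)) =
      BTensor.map₂ B M (rsmulLeftLinear B Γ N g)
        (Submodule.Quotient.mk ((TensorProduct.comm ℤ N M) y))
    rw [BTensor.map₂_mk]
    congr 1
    induction y using TensorProduct.induction_on with
    | zero => simp
    | tmul n m =>
        simp [TensorProduct.smul_tmul', rsmulLeftLinear, TensorProduct.comm_tmul]
    | add x y hx hy => simp [smul_add, hx, hy]

end Right

instance BTensor.smulCommClass [Module Γ M] [SMulCommClass Γ Bᵐᵒᵖ M]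
    [Module Γᵐᵒᵖ N] [SMulCommClass B Γᵐᵒᵖ N] :
    SMulCommClass Γ Γᵐᵒᵖ (BTensor B M N) := by
  constructor
  intro g og x
  obtain ⟨y, rfl⟩ := Submodule.Quotient.mk_surjective _ x
  show (BTensor.map₁ B N (lsmulRightLinear B Γ M g)) ((BTensor.map₂ B M (rsmulLeftLinear B Γ N og)) _)
    = (BTensor.map₂ B M (rsmulLeftLinear B Γ N og)) ((BTensor.map₁ B N (lsmulRightLinear B Γ M g)) _)
  rw [BTensor.map₂_mk, BTensor.map₁_mk, BTensor.map₁_mk, BTensor.map₂_mk]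
  congr 1
  induction y using TensorProduct.induction_on with
  | zero => simp
  | tmul m n => simp [lsmulRightLinear, rsmulLeftLinear]
  | add x y hx hy => simp [hx, hy]

end LeftRight

section Bimod

variable (B : Type) [Ring B]

/-- A `B`-`B`-bimodule, packaged. -/
structure BBimod : Type 1 where
  X : Type
  [addcg : AddCommGroup X]
  [left : Module B X]
  [right : Module Bᵐᵒᵖ X]
  [comm : SMulCommClass B Bᵐᵒᵖ X]

attribute [instance] BBimod.addcg BBimod.left BBimod.right BBimod.comm

variable {B}

/-- tensor product of bimodules over `B`. -/
def BBimod.tensor (M N : BBimod B) : BBimod B where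
  X := BTensor B M.X N.X

/-- `M.pow j` is the tensor power `M^{⊗_B (j+1)}`. -/
def BBimod.pow (M : BBimod B) : ℕ → BBimod B
  | 0 => M
  | (j + 1) => M.tensor (M.pow j)

end Bimod

section Tor

variable (R : Type) [Ring R]

/-- `P`, `d`, `ε` form a projective resolution of the left `R`-module `N`. -/
def IsProjResolution (N : Type) [AddCommGroup N] [Module R N]
    (P : ℕ → ModuleCat R) (d : ∀ i, P (i + 1) ⟶ P i) (ε : P 0 ⟶ ModuleCat.of R N) : Prop :=
  (∀ i, Module.Projective R (P i)) ∧ Function.Surjective ε ∧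
    LinearMap.range (d 0).hom = LinearMap.ker ε.hom ∧
    ∀ i, LinearMap.range (d (i + 1)).hom = LinearMap.ker (d i).hom

/-- `Tor_i^R(M, N) = 0` for all `i ≥ 1`: for every projective resolution `P⬝` of `N`, the
complex `M ⊗_R P⬝` is exact in all positive degrees. -/
def TorVanishesPos (M : Type) [AddCommGroup M] [Module Rᵐᵒᵖ M]
    (N : Type) [AddCommGroup N] [Module R N] : Prop :=
  ∀ (P : ℕ → ModuleCat R) (d : ∀ i, P (i + 1) ⟶ P i) (ε : P 0 ⟶ ModuleCat.of R N),
    IsProjResolution R N P d ε →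
    ∀ i, LinearMap.range (BTensor.map₂ R M (d (i + 1)).hom) =
      LinearMap.ker (BTensor.map₂ R M (d i).hom)

end Tor

section ExtGp

variable (R : Type) [Ring R]

/-- `Ext_R^{i+1}(U, Y) = 0`: for every projective resolution of `U`, the induced complex of
`Hom` groups is exact at the spot computing `Ext^{i+1}`. -/
def ExtVanishSucc (U : Type) [AddCommGroup U] [Module R U]
    (Y : Type) [AddCommGroup Y] [Module R Y] (i : ℕ) : Prop :=
  ∀ (P : ℕ → ModuleCat R) (d : ∀ n, P (n + 1) ⟶ P n) (ε : P 0 ⟶ ModuleCat.of R U),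
    IsProjResolution R U P d ε →
    ∀ g : P (i + 1) →ₗ[R] Y, g.comp (d (i + 1)).hom = 0 →
      ∃ h : P i →ₗ[R] Y, h.comp (d i).hom = g

/-- `U` is a Gorenstein projective `R`-module: it is (isomorphic to) a cycle module of a
complete projective resolution, i.e. an exact complex of projectives which stays exact
under `Hom_R(-, R)`. -/
def IsGorensteinProj (U : Type) [AddCommGroup U] [Module R U] : Prop :=
  ∃ (P : ℤ → ModuleCat.{0} R) (d : ∀ i, P i ⟶ P (i + 1)),
    (∀ i, Module.Projective R (P i)) ∧
    (∀ i, LinearMap.range (d i).hom = LinearMap.ker (d (i + 1)).hom) ∧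
    (∀ (i : ℤ) (g : P (i + 1) →ₗ[R] R), g.comp (d i).hom = 0 ↔
      ∃ h : P (i + 1 + 1) →ₗ[R] R, h.comp (d (i + 1)).hom = g) ∧
    Nonempty (U ≃ₗ[R] LinearMap.ker (d 0).hom)

/-- `Y ∈ Gproj(R)^⊥`: `Ext_R^i(U, Y) = 0` for every finitely generated Gorenstein
projective `U` and every `i ≥ 1`. -/
def MemGprojPerp (Y : Type) [AddCommGroup Y] [Module R Y] : Prop :=
  ∀ (U : Type) [AddCommGroup U] [Module R U], Module.Finite R U → IsGorensteinProj R U →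
    ∀ i : ℕ, ExtVanishSucc R U Y i

/-- `X ∈ ^⊥R`: `Ext_R^i(X, R) = 0` for all `i ≥ 1`. -/
def MemPerpRing (X : Type) [AddCommGroup X] [Module R X] : Prop :=
  ∀ i : ℕ, ExtVanishSucc R X R i

/-- projective dimension at most `n`. -/
def pdLE : ℕ → ModuleCat R → Prop
  | 0, M => Module.Projective R M
  | (n + 1), M => ∃ (P : ModuleCat R) (f : P ⟶ M),
      Module.Projective R P ∧ Function.Surjective f ∧ pdLE n (ModuleCat.of R (LinearMap.ker f.hom))

/-- `M` has finite projective dimension over `R`. -/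
def HasFinProjDim (M : Type) [AddCommGroup M] [Module R M] : Prop :=
  ∃ n, pdLE R n (ModuleCat.of R M)

end ExtGp

section AuxDev

open Finsupp MulOpposite

namespace BTensorAux

variable {B : Type} [Ring B]
variable {M M' M'' : Type} [AddCommGroup M] [AddCommGroup M'] [AddCommGroup M'']
  [Module Bᵐᵒᵖ M] [Module Bᵐᵒᵖ M'] [Module Bᵐᵒᵖ M'']
variable {N N' N'' : Type} [AddCommGroup N] [AddCommGroup N'] [AddCommGroup N'']
  [Module B N] [Module B N'] [Module B N'']

theorem map₂_comp (f : N →ₗ[B] N') (f' : N' →ₗ[B] N'') (x : BTensor B M N) :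
    BTensor.map₂ B M (f'.comp f) x = BTensor.map₂ B M f' (BTensor.map₂ B M f x) := by
  obtain ⟨y, rfl⟩ := Submodule.Quotient.mk_surjective _ x
  rw [BTensor.map₂_mk, BTensor.map₂_mk, BTensor.map₂_mk]
  congr 1
  induction y using TensorProduct.induction_on with
  | zero => simp
  | tmul m n => simp
  | add a b ha hb => simp only [map_add, ha, hb]

theorem map₂_zero (x : BTensor B M N) :
    BTensor.map₂ B M (0 : N →ₗ[B] N') x = 0 := by
  obtain ⟨y, rfl⟩ := Submodule.Quotient.mk_surjective _ x
  rw [BTensor.map₂_mk]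
  have : (TensorProduct.map (LinearMap.id (R := ℤ) (M := M))
      ((0 : N →ₗ[B] N').toAddMonoidHom.toIntLinearMap)) y = 0 := by
    induction y using TensorProduct.induction_on with
    | zero => simp
    | tmul m n => simp
    | add a b ha hb => simp only [map_add, ha, hb, add_zero]
  rw [this]
  rfl

theorem map₂_id (x : BTensor B M N) :
    BTensor.map₂ B M (LinearMap.id : N →ₗ[B] N) x = x := by
  obtain ⟨y, rfl⟩ := Submodule.Quotient.mk_surjective _ x
  rw [BTensor.map₂_mk]
  congr 1
  induction y using TensorProduct.induction_on with
  | zero => simp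
  | tmul m n => simp
  | add a b ha hb => simp only [map_add, ha, hb]

theorem map₁_comp (g : M →ₗ[Bᵐᵒᵖ] M') (g' : M' →ₗ[Bᵐᵒᵖ] M'') (x : BTensor B M N) :
    BTensor.map₁ B N (g'.comp g) x = BTensor.map₁ B N g' (BTensor.map₁ B N g x) := by
  obtain ⟨y, rfl⟩ := Submodule.Quotient.mk_surjective _ x
  rw [BTensor.map₁_mk, BTensor.map₁_mk, BTensor.map₁_mk]
  congr 1
  induction y using TensorProduct.induction_on with
  | zero => simp
  | tmul m n => simp
  | add a b ha hb => simp only [map_add, ha, hb]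

theorem map₁_zero (x : BTensor B M N) :
    BTensor.map₁ B N (0 : M →ₗ[Bᵐᵒᵖ] M') x = 0 := by
  obtain ⟨y, rfl⟩ := Submodule.Quotient.mk_surjective _ x
  rw [BTensor.map₁_mk]
  have : (TensorProduct.map ((0 : M →ₗ[Bᵐᵒᵖ] M').toAddMonoidHom.toIntLinearMap)
      (LinearMap.id (R := ℤ) (M := N))) y = 0 := by
    induction y using TensorProduct.induction_on with
    | zero => simp
    | tmul m n => simp
    | add a b ha hb => simp only [map_add, ha, hb, add_zero]
  rw [this]
  rfl

theorem map₁_id (x : BTensor B M N) :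
    BTensor.map₁ B N (LinearMap.id : M →ₗ[Bᵐᵒᵖ] M) x = x := by
  obtain ⟨y, rfl⟩ := Submodule.Quotient.mk_surjective _ x
  rw [BTensor.map₁_mk]
  congr 1
  induction y using TensorProduct.induction_on with
  | zero => simp
  | tmul m n => simp
  | add a b ha hb => simp only [map_add, ha, hb]

theorem map_comm (f : N →ₗ[B] N') (g : M →ₗ[Bᵐᵒᵖ] M') (x : BTensor B M N) :
    BTensor.map₂ B M' f (BTensor.map₁ B N g x) = BTensor.map₁ B N' g (BTensor.map₂ B M f x) := by
  obtain ⟨y, rfl⟩ := Submodule.Quotient.mk_surjective _ x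
  rw [BTensor.map₁_mk, BTensor.map₂_mk, BTensor.map₂_mk, BTensor.map₁_mk]
  congr 1
  induction y using TensorProduct.induction_on with
  | zero => simp
  | tmul m n => simp
  | add a b ha hb => simp only [map_add, ha, hb]

theorem map₂_surjective (f : N →ₗ[B] N') (hf : Function.Surjective f) :
    Function.Surjective (BTensor.map₂ B M f) := by
  intro x
  obtain ⟨y, rfl⟩ := Submodule.Quotient.mk_surjective _ x
  induction y using TensorProduct.induction_on with
  | zero =>
      exact ⟨0, by rw [map_zero]; rfl⟩
  | tmul m n =>
      obtain ⟨n', rfl⟩ := hf n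
      exact ⟨Submodule.Quotient.mk (m ⊗ₜ[ℤ] n'), by rw [BTensor.map₂_mk]; rfl⟩
  | add a b ha hb =>
      obtain ⟨xa, ha⟩ := ha
      obtain ⟨xb, hb⟩ := hb
      refine ⟨xa + xb, ?_⟩
      rw [map_add, ha, hb]
      exact (Submodule.Quotient.mk_add ..).symm

theorem map₁_surjective (g : M →ₗ[Bᵐᵒᵖ] M') (hg : Function.Surjective g) :
    Function.Surjective (BTensor.map₁ B N g) := by
  intro x
  obtain ⟨y, rfl⟩ := Submodule.Quotient.mk_surjective _ x
  induction y using TensorProduct.induction_on with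
  | zero =>
      exact ⟨0, by rw [map_zero]; rfl⟩
  | tmul m n =>
      obtain ⟨m', rfl⟩ := hg m
      exact ⟨Submodule.Quotient.mk (m' ⊗ₜ[ℤ] n), by rw [BTensor.map₁_mk]; rfl⟩
  | add a b ha hb =>
      obtain ⟨xa, ha⟩ := ha
      obtain ⟨xb, hb⟩ := hb
      refine ⟨xa + xb, ?_⟩
      rw [map_add, ha, hb]
      exact (Submodule.Quotient.mk_add ..).symm

section FreeIso

variable (B) (ι : Type)

/-- auxiliary additive map for `e2fwd`. -/
def e2aux : (ι →₀ B) →+ (M →ₗ[ℤ] (ι →₀ M)) :=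
  Finsupp.liftAddHom fun i =>
    { toFun := fun b => ((Finsupp.singleAddHom i).comp
        (AddMonoidHom.mk' (fun m => op b • m) (smul_add (op b)))).toIntLinearMap
      map_zero' := by
        ext m
        simp
      map_add' := fun b b' => by
        ext m
        simp [op_add, add_smul] }

theorem e2aux_single (i : ι) (b : B) (m : M) :
    e2aux (M := M) B ι (Finsupp.single i b) m = Finsupp.single i (op b • m) := by
  simp [e2aux]

/-- the forward map of the iso `M ⊗[ℤ] (ι →₀ B) → (ι →₀ M)` on the plain tensor product. -/
def e2fwd : TensorProduct ℤ M (ι →₀ B) →ₗ[ℤ] (ι →₀ M) :=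
  TensorProduct.lift (e2aux (M := M) B ι).toIntLinearMap.flip

theorem e2fwd_tmul (m : M) (t : ι →₀ B) :
    e2fwd (M := M) B ι (m ⊗ₜ[ℤ] t) = e2aux (M := M) B ι t m := by
  simp [e2fwd]
  exact TensorProduct.lift.tmul _ _

theorem e2fwd_tmul_single (m : M) (i : ι) (b : B) :
    e2fwd (M := M) B ι (m ⊗ₜ[ℤ] Finsupp.single i b) = Finsupp.single i (op b • m) := by
  rw [e2fwd_tmul, e2aux_single]

theorem e2fwd_rel (m : M) (b : B) (t : ι →₀ B) :
    e2fwd (M := M) B ι ((op b • m) ⊗ₜ[ℤ] t) = e2fwd (M := M) B ι (m ⊗ₜ[ℤ] (b • t)) := by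
  induction t using Finsupp.induction_linear with
  | zero => simp
  | add f g hf hg => rw [smul_add, TensorProduct.tmul_add, TensorProduct.tmul_add,
      map_add, map_add, hf, hg]
  | single i c =>
      rw [Finsupp.smul_single, e2fwd_tmul_single, e2fwd_tmul_single]
      rw [smul_eq_mul, op_mul, mul_smul]

/-- the iso `BTensor B M (ι →₀ B) → (ι →₀ M)`. -/
def e2 : BTensor B M (ι →₀ B) →ₗ[ℤ] (ι →₀ M) :=
  Submodule.liftQ _ (e2fwd (M := M) B ι) (by
    rw [BTrel, Submodule.span_le]
    rintro x ⟨m, b, t, rfl⟩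
    simp only [SetLike.mem_coe, LinearMap.mem_ker, map_sub]
    rw [e2fwd_rel, sub_self])

theorem e2_mk (y : TensorProduct ℤ M (ι →₀ B)) :
    e2 (M := M) B ι (Submodule.Quotient.mk y) = e2fwd (M := M) B ι y := rfl

/-- the inverse map of `e2`. -/
def e2inv : (ι →₀ M) →ₗ[ℤ] BTensor B M (ι →₀ B) :=
  Finsupp.lsum ℤ fun i => (BTrel B M (ι →₀ B)).mkQ.comp
    ((TensorProduct.mk ℤ M (ι →₀ B)).flip (Finsupp.single i 1))

theorem e2inv_single (i : ι) (m : M) :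
    e2inv (M := M) B ι (Finsupp.single i m) =
      Submodule.Quotient.mk (m ⊗ₜ[ℤ] Finsupp.single i (1 : B)) := by
  simp only [e2inv, Finsupp.lsum_single]
  exact (Finsupp.lsum_single ..).trans rfl

theorem e2inv_e2 (x : BTensor B M (ι →₀ B)) : e2inv (M := M) B ι (e2 (M := M) B ι x) = x := by
  obtain ⟨y, rfl⟩ := Submodule.Quotient.mk_surjective _ x
  rw [e2_mk]
  induction y using TensorProduct.induction_on with
  | zero => simp; rfl
  | add a b ha hb => rw [map_add, map_add, ha, hb, Submodule.Quotient.mk_add]; rfl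
  | tmul m t =>
      induction t using Finsupp.induction_linear with
      | zero => simp; rfl
      | add f g hf hg =>
          rw [TensorProduct.tmul_add, map_add, map_add, hf, hg, Submodule.Quotient.mk_add]; rfl
      | single i b =>
          rw [e2fwd_tmul_single, e2inv_single]
          refine (Submodule.Quotient.eq (p := _)).mpr ?_
          refine Submodule.subset_span ⟨m, b, Finsupp.single i 1, ?_⟩
          rw [Finsupp.smul_single, smul_eq_mul, mul_one]

theorem e2_e2inv (h : ι →₀ M) : e2 (M := M) B ι (e2inv (M := M) B ι h) = h := by
  induction h using Finsupp.induction_linear with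
  | zero => simp
  | add f g hf hg => rw [map_add, map_add, hf, hg]
  | single i m => rw [e2inv_single, e2_mk, e2fwd_tmul_single, op_one, one_smul]

theorem e2_nat (g : M →ₗ[Bᵐᵒᵖ] M') (x : BTensor B M (ι →₀ B)) :
    e2 (M := M') B ι (BTensor.map₁ B (ι →₀ B) g x) =
      Finsupp.mapRange g (map_zero g) (e2 (M := M) B ι x) := by
  obtain ⟨y, rfl⟩ := Submodule.Quotient.mk_surjective _ x
  rw [BTensor.map₁_mk, e2_mk, e2_mk]
  induction y using TensorProduct.induction_on with
  | zero => simp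
  | add a b ha hb => rw [map_add, map_add, map_add, Finsupp.mapRange_add (map_add g), ha, hb]
  | tmul m t =>
      induction t using Finsupp.induction_linear with
      | zero => simp
      | add f g' hf hg =>
          simp only [TensorProduct.tmul_add, map_add]
          rw [Finsupp.mapRange_add (map_add g), hf, hg]
      | single i b =>
          rw [TensorProduct.map_tmul]
          simp only [AddMonoidHom.coe_toIntLinearMap, LinearMap.toAddMonoidHom_coe,
            LinearMap.id_coe, id_eq]
          rw [e2fwd_tmul_single, e2fwd_tmul_single, Finsupp.mapRange_single, map_smul]

/-- auxiliary additive map for `e1fwd`. -/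
def e1aux : (ι →₀ Bᵐᵒᵖ) →+ (N →ₗ[ℤ] (ι →₀ N)) :=
  Finsupp.liftAddHom fun i =>
    { toFun := fun ρ => ((Finsupp.singleAddHom i).comp
        (AddMonoidHom.mk' (fun n => ρ.unop • n) (smul_add ρ.unop))).toIntLinearMap
      map_zero' := by
        ext n
        simp
      map_add' := fun ρ ρ' => by
        ext n
        simp [add_smul] }

theorem e1aux_single (i : ι) (ρ : Bᵐᵒᵖ) (n : N) :
    e1aux (N := N) B ι (Finsupp.single i ρ) n = Finsupp.single i (ρ.unop • n) := by
  simp [e1aux]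

/-- the forward map of the iso `(ι →₀ Bᵐᵒᵖ) ⊗[ℤ] N → (ι →₀ N)` on the plain tensor product. -/
def e1fwd : TensorProduct ℤ (ι →₀ Bᵐᵒᵖ) N →ₗ[ℤ] (ι →₀ N) :=
  TensorProduct.lift (e1aux (N := N) B ι).toIntLinearMap

theorem e1fwd_tmul (t : ι →₀ Bᵐᵒᵖ) (n : N) :
    e1fwd (N := N) B ι (t ⊗ₜ[ℤ] n) = e1aux (N := N) B ι t n := by
  simp [e1fwd]
  exact TensorProduct.lift.tmul _ _

theorem e1fwd_tmul_single (i : ι) (ρ : Bᵐᵒᵖ) (n : N) :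
    e1fwd (N := N) B ι (Finsupp.single i ρ ⊗ₜ[ℤ] n) = Finsupp.single i (ρ.unop • n) := by
  rw [e1fwd_tmul, e1aux_single]

theorem e1fwd_rel (t : ι →₀ Bᵐᵒᵖ) (b : B) (n : N) :
    e1fwd (N := N) B ι ((op b • t) ⊗ₜ[ℤ] n) = e1fwd (N := N) B ι (t ⊗ₜ[ℤ] (b • n)) := by
  induction t using Finsupp.induction_linear with
  | zero => simp
  | add f g hf hg => rw [smul_add, TensorProduct.add_tmul, TensorProduct.add_tmul,
      map_add, map_add, hf, hg]
  | single i ρ =>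
      rw [Finsupp.smul_single, e1fwd_tmul_single, e1fwd_tmul_single]
      rw [smul_eq_mul, unop_mul, unop_op, mul_smul]

/-- the iso `BTensor B (ι →₀ Bᵐᵒᵖ) N → (ι →₀ N)`. -/
def e1 : BTensor B (ι →₀ Bᵐᵒᵖ) N →ₗ[ℤ] (ι →₀ N) :=
  Submodule.liftQ _ (e1fwd (N := N) B ι) (by
    rw [BTrel, Submodule.span_le]
    rintro x ⟨t, b, n, rfl⟩
    simp only [SetLike.mem_coe, LinearMap.mem_ker, map_sub]
    rw [e1fwd_rel, sub_self])

theorem e1_mk (y : TensorProduct ℤ (ι →₀ Bᵐᵒᵖ) N) :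
    e1 (N := N) B ι (Submodule.Quotient.mk y) = e1fwd (N := N) B ι y := rfl

/-- the inverse map of `e1`. -/
def e1inv : (ι →₀ N) →ₗ[ℤ] BTensor B (ι →₀ Bᵐᵒᵖ) N :=
  Finsupp.lsum ℤ fun i => (BTrel B (ι →₀ Bᵐᵒᵖ) N).mkQ.comp
    ((TensorProduct.mk ℤ (ι →₀ Bᵐᵒᵖ) N) (Finsupp.single i 1))

theorem e1inv_single (i : ι) (n : N) :
    e1inv (N := N) B ι (Finsupp.single i n) =
      Submodule.Quotient.mk (Finsupp.single i (1 : Bᵐᵒᵖ) ⊗ₜ[ℤ] n) := by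
  simp only [e1inv, Finsupp.lsum_single]
  exact (Finsupp.lsum_single ..).trans rfl

theorem e1inv_e1 (x : BTensor B (ι →₀ Bᵐᵒᵖ) N) :
    e1inv (N := N) B ι (e1 (N := N) B ι x) = x := by
  obtain ⟨y, rfl⟩ := Submodule.Quotient.mk_surjective _ x
  rw [e1_mk]
  induction y using TensorProduct.induction_on with
  | zero => simp; rfl
  | add a b ha hb => rw [map_add, map_add, ha, hb, Submodule.Quotient.mk_add]; rfl
  | tmul t n =>
      induction t using Finsupp.induction_linear with
      | zero => simp; rfl
      | add f g hf hg =>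
          rw [TensorProduct.add_tmul, map_add, map_add, hf, hg, Submodule.Quotient.mk_add]; rfl
      | single i ρ =>
          rw [e1fwd_tmul_single, e1inv_single]
          refine (Submodule.Quotient.eq (p := _)).mpr ?_
          rw [← neg_sub]
          refine Submodule.neg_mem _ (Submodule.subset_span
            ⟨Finsupp.single i 1, ρ.unop, n, ?_⟩)
          rw [Finsupp.smul_single, smul_eq_mul, op_unop, mul_one]

theorem e1_e1inv (h : ι →₀ N) : e1 (N := N) B ι (e1inv (N := N) B ι h) = h := by
  induction h using Finsupp.induction_linear with
  | zero => simp
  | add f g hf hg => rw [map_add, map_add, hf, hg]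
  | single i n => rw [e1inv_single, e1_mk, e1fwd_tmul_single, unop_one, one_smul]

theorem e1_nat (f : N →ₗ[B] N') (x : BTensor B (ι →₀ Bᵐᵒᵖ) N) :
    e1 (N := N') B ι (BTensor.map₂ B (ι →₀ Bᵐᵒᵖ) f x) =
      Finsupp.mapRange f (map_zero f) (e1 (N := N) B ι x) := by
  obtain ⟨y, rfl⟩ := Submodule.Quotient.mk_surjective _ x
  rw [BTensor.map₂_mk, e1_mk, e1_mk]
  induction y using TensorProduct.induction_on with
  | zero => simp
  | add a b ha hb => rw [map_add, map_add, map_add, Finsupp.mapRange_add (map_add f), ha, hb]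
  | tmul t n =>
      induction t using Finsupp.induction_linear with
      | zero => simp
      | add u v hu hv =>
          simp only [TensorProduct.add_tmul, map_add]
          rw [Finsupp.mapRange_add (map_add f), hu, hv]
      | single i ρ =>
          rw [TensorProduct.map_tmul]
          simp only [AddMonoidHom.coe_toIntLinearMap, LinearMap.toAddMonoidHom_coe,
            LinearMap.id_coe, id_eq]
          rw [e1fwd_tmul_single, e1fwd_tmul_single, Finsupp.mapRange_single, map_smul]

theorem e1inv_nat (f : N →ₗ[B] N') (h : ι →₀ N) :
    BTensor.map₂ B (ι →₀ Bᵐᵒᵖ) f (e1inv (N := N) B ι h) =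
      e1inv (N := N') B ι (Finsupp.mapRange f (map_zero f) h) := by
  induction h using Finsupp.induction_linear with
  | zero => simp
  | add u v hu hv =>
      simp only [map_add]
      rw [hu, hv, Finsupp.mapRange_add (map_add f), map_add]
  | single i n =>
      rw [e1inv_single, Finsupp.mapRange_single, e1inv_single, BTensor.map₂_mk]
      rfl

end FreeIso

section Exactness

variable (B : Type) [Ring B]
variable {M M' M'' Q : Type} [AddCommGroup M] [AddCommGroup M'] [AddCommGroup M'']
  [AddCommGroup Q] [Module Bᵐᵒᵖ M] [Module Bᵐᵒᵖ M'] [Module Bᵐᵒᵖ M''] [Module Bᵐᵒᵖ Q]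
variable {N N' N'' : Type} [AddCommGroup N] [AddCommGroup N'] [AddCommGroup N'']
  [Module B N] [Module B N'] [Module B N'']

/-- Exactness of tensoring with a free right module, in the second variable. -/
theorem free_exact₂ (ι : Type) (f : N →ₗ[B] N') (g : N' →ₗ[B] N'')
    (hfg : LinearMap.range f = LinearMap.ker g) (x : BTensor B (ι →₀ Bᵐᵒᵖ) N') :
    BTensor.map₂ B (ι →₀ Bᵐᵒᵖ) g x = 0 ↔
      x ∈ LinearMap.range (BTensor.map₂ B (ι →₀ Bᵐᵒᵖ) f) := by
  constructor
  · intro hx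
    have h0 : Finsupp.mapRange g (map_zero g) (e1 (N := N') B ι x) = 0 := by
      rw [← e1_nat, hx, map_zero]
    have hmem : ∀ i, (e1 (N := N') B ι x) i ∈ LinearMap.range f := by
      intro i
      rw [hfg, LinearMap.mem_ker]
      have := DFunLike.congr_fun h0 i
      rwa [Finsupp.mapRange_apply] at this
    classical
    set u := e1 (N := N') B ι x with hu
    set h' : ι →₀ N := u.support.sum
      (fun i => Finsupp.single i (Classical.choose (hmem i))) with hh'
    have hmr : Finsupp.mapRange f (map_zero f) h' = u := by
      rw [hh']
      have hcoe : (Finsupp.mapRange (⇑f) (map_zero f) : (ι →₀ N) → (ι →₀ N')) =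
          ⇑(Finsupp.mapRange.addMonoidHom f.toAddMonoidHom) := rfl
      rw [hcoe]
      rw [map_sum (Finsupp.mapRange.addMonoidHom f.toAddMonoidHom)
        (fun i => Finsupp.single i (Classical.choose (hmem i))) u.support]
      have : ∀ i ∈ u.support,
          (Finsupp.mapRange.addMonoidHom f.toAddMonoidHom)
            (Finsupp.single i (Classical.choose (hmem i))) = Finsupp.single i (u i) := by
        intro i _
        rw [Finsupp.mapRange.addMonoidHom_apply, Finsupp.mapRange_single]
        rw [LinearMap.toAddMonoidHom_coe, Classical.choose_spec (hmem i)]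
      rw [Finset.sum_congr rfl this]
      exact Finsupp.sum_single u
    refine ⟨e1inv (N := N) B ι h', ?_⟩
    rw [e1inv_nat, hmr, hu, e1inv_e1]
  · rintro ⟨w, rfl⟩
    rw [← map₂_comp]
    have hgf : g.comp f = 0 := by
      ext y
      have : f y ∈ LinearMap.ker g := by rw [← hfg]; exact ⟨y, rfl⟩
      exact this
    rw [hgf, map₂_zero]

/-- Exactness of tensoring with a projective right module, in the second variable. -/
theorem flat_exact₂ (hM : Module.Projective Bᵐᵒᵖ M) (f : N →ₗ[B] N') (g : N' →ₗ[B] N'')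
    (hfg : LinearMap.range f = LinearMap.ker g) :
    LinearMap.range (BTensor.map₂ B M f) = LinearMap.ker (BTensor.map₂ B M g) := by
  obtain ⟨s, hs⟩ := Module.projective_def.mp hM
  have hrs : ∀ m : M, Finsupp.linearCombination Bᵐᵒᵖ id (s m) = m := hs
  ext x
  rw [LinearMap.mem_ker]
  constructor
  · rintro ⟨w, rfl⟩
    rw [← map₂_comp]
    have hgf : g.comp f = 0 := by
      ext y
      have : f y ∈ LinearMap.ker g := by rw [← hfg]; exact ⟨y, rfl⟩
      exact this
    rw [hgf, map₂_zero]
  · intro hx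
    have h1 : BTensor.map₂ B (M →₀ Bᵐᵒᵖ) g (BTensor.map₁ B N' s x) = 0 := by
      rw [map_comm, hx, map_zero]
    obtain ⟨w, hw⟩ := (free_exact₂ B M f g hfg _).mp h1
    refine ⟨BTensor.map₁ B N (Finsupp.linearCombination Bᵐᵒᵖ id) w, ?_⟩
    rw [map_comm, hw, ← map₁_comp]
    have : (Finsupp.linearCombination Bᵐᵒᵖ (id : M → M)).comp s = LinearMap.id :=
      LinearMap.ext hrs
    rw [this, map₁_id]

/-- Tensoring with a free left module preserves injectivity, in the first variable. -/
theorem free_inj₁ (ι : Type) (g : M →ₗ[Bᵐᵒᵖ] M') (hg : Function.Injective g) :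
    Function.Injective (BTensor.map₁ B (ι →₀ B) g) := by
  intro a b hab
  have h0 : BTensor.map₁ B (ι →₀ B) g (a - b) = 0 := by
    rw [map_sub, hab, sub_self]
  have h1 : Finsupp.mapRange g (map_zero g) (e2 (M := M) B ι (a - b)) = 0 := by
    rw [← e2_nat, h0, map_zero]
  have h2 : e2 (M := M) B ι (a - b) = 0 := by
    ext i
    have h1i := DFunLike.congr_fun h1 i
    rw [Finsupp.mapRange_apply, Finsupp.zero_apply] at h1i
    rw [Finsupp.zero_apply]
    exact hg (by rw [h1i, map_zero])
  have := congrArg (e2inv (M := M) B ι) h2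
  rwa [e2inv_e2, map_zero, sub_eq_zero] at this

/-- Tensoring with a projective left module preserves injectivity, in the first variable. -/
theorem flat_inj₁ (hN : Module.Projective B N) (g : M →ₗ[Bᵐᵒᵖ] M') (hg : Function.Injective g) :
    Function.Injective (BTensor.map₁ B N g) := by
  obtain ⟨s, hs⟩ := Module.projective_def.mp hN
  intro a b hab
  have h1 : BTensor.map₁ B (N →₀ B) g (BTensor.map₂ B M s a) =
      BTensor.map₁ B (N →₀ B) g (BTensor.map₂ B M s b) := by
    rw [← map_comm, ← map_comm, hab]
  have h2 := free_inj₁ B N g hg h1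
  have h3 := congrArg (BTensor.map₂ B M (Finsupp.linearCombination B (id : N → N))) h2
  rw [← map₂_comp, ← map₂_comp] at h3
  have : (Finsupp.linearCombination B (id : N → N)).comp s = LinearMap.id := LinearMap.ext hs
  rwa [this, map₂_id, map₂_id] at h3

/-- Right exactness in the first variable. -/
theorem rexact₁ (q : Q →ₗ[Bᵐᵒᵖ] M) (hq : Function.Surjective q) :
    LinearMap.range (BTensor.map₁ B N (LinearMap.ker q).subtype) =
      LinearMap.ker (BTensor.map₁ B N q) := by
  ext y
  rw [LinearMap.mem_ker]
  constructor
  · rintro ⟨w, rfl⟩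
    rw [← map₁_comp]
    have h0 : q.comp (LinearMap.ker q).subtype = 0 := by
      ext ⟨z, hz⟩
      exact hz
    rw [h0, map₁_zero]
  · intro hy
    obtain ⟨yt, rfl⟩ := Submodule.Quotient.mk_surjective _ y
    rw [BTensor.map₁_mk] at hy
    replace hy := (Submodule.Quotient.mk_eq_zero (p := _)).mp hy
    -- the relation module of `M` is covered by that of `Q`
    have hcover : BTrel B M N ≤ Submodule.map
        (TensorProduct.map q.toAddMonoidHom.toIntLinearMap LinearMap.id) (BTrel B Q N) := by
      rw [BTrel]
      refine Submodule.span_le.mpr ?_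
      rintro x ⟨m, b, n, rfl⟩
      obtain ⟨u, rfl⟩ := hq m
      refine ⟨(op b • u) ⊗ₜ[ℤ] n - u ⊗ₜ[ℤ] (b • n),
        Submodule.subset_span ⟨u, b, n, rfl⟩, ?_⟩
      simp only [map_sub, TensorProduct.map_tmul, AddMonoidHom.coe_toIntLinearMap,
        LinearMap.toAddMonoidHom_coe, LinearMap.id_coe, id_eq]
      rw [map_smul]
    obtain ⟨t, ht, hteq⟩ := hcover hy
    have hker : TensorProduct.map q.toAddMonoidHom.toIntLinearMap LinearMap.id (yt - t) = 0 := by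
      rw [map_sub, hteq, sub_self]
    -- use right exactness of the plain tensor product over ℤ
    have hexact : Function.Exact
        ((LinearMap.ker q).subtype.toAddMonoidHom.toIntLinearMap :
          ↥(LinearMap.ker q) →ₗ[ℤ] Q)
        (q.toAddMonoidHom.toIntLinearMap : Q →ₗ[ℤ] M) := by
      intro z
      constructor
      · intro hz
        exact ⟨⟨z, hz⟩, rfl⟩
      · rintro ⟨⟨w, hw⟩, rfl⟩
        exact hw
    have := rTensor_exact (R := ℤ) N hexact hq
    have hmem := (this (yt - t)).mp hker
    obtain ⟨z, hz⟩ := hmem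
    refine ⟨Submodule.Quotient.mk z, ?_⟩
    rw [BTensor.map₁_mk]
    have heq : Submodule.Quotient.mk (p := BTrel B Q N) yt =
        Submodule.Quotient.mk (yt - t) := by
      rw [Submodule.Quotient.eq]
      simpa using (show t ∈ BTrel B Q N from ht)
    have hz' : (TensorProduct.map ((LinearMap.ker q).subtype.toAddMonoidHom.toIntLinearMap)
        (LinearMap.id : N →ₗ[ℤ] N)) z = yt - t := hz
    rw [heq, hz']

end Exactness

section Chase

variable (B : Type) [Ring B]
variable {Mc Qc : Type} [AddCommGroup Mc] [AddCommGroup Qc] [Module Bᵐᵒᵖ Mc] [Module Bᵐᵒᵖ Qc]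
variable {N1 N2 N3 N4 : Type} [AddCommGroup N1] [AddCommGroup N2] [AddCommGroup N3]
  [AddCommGroup N4] [Module B N1] [Module B N2] [Module B N3] [Module B N4]

/-- The diagram chase: a quotient of exact complexes (with exact kernel data) is exact. -/
theorem chase (d1 : N1 →ₗ[B] N2) (d2 : N2 →ₗ[B] N3) (d3 : N3 →ₗ[B] N4)
    (hproj4 : Module.Projective B N4)
    (h21 : LinearMap.range d1 = LinearMap.ker d2)
    (h32 : LinearMap.range d2 = LinearMap.ker d3)
    (hQ : Module.Projective Bᵐᵒᵖ Qc)
    (f : Qc →ₗ[Bᵐᵒᵖ] Mc) (hf : Function.Surjective f)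
    (hK : LinearMap.range (BTensor.map₂ B (↥(LinearMap.ker f)) d2) =
      LinearMap.ker (BTensor.map₂ B (↥(LinearMap.ker f)) d3)) :
    LinearMap.range (BTensor.map₂ B Mc d1) = LinearMap.ker (BTensor.map₂ B Mc d2) := by
  have h210 : d2.comp d1 = 0 := by
    ext y
    have : d1 y ∈ LinearMap.ker d2 := by rw [← h21]; exact ⟨y, rfl⟩
    exact this
  have h320 : d3.comp d2 = 0 := by
    ext y
    have : d2 y ∈ LinearMap.ker d3 := by rw [← h32]; exact ⟨y, rfl⟩
    exact this
  apply le_antisymm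
  · rintro x ⟨w, rfl⟩
    show BTensor.map₂ B Mc d2 _ = 0
    rw [← map₂_comp, h210, map₂_zero]
  · intro c hc
    rw [LinearMap.mem_ker] at hc
    obtain ⟨b, rfl⟩ := map₁_surjective f hf c
    have h1 : BTensor.map₁ B N3 f (BTensor.map₂ B Qc d2 b) = 0 :=
      (map_comm d2 f b).symm.trans hc
    have hmem : BTensor.map₂ B Qc d2 b ∈
        LinearMap.range (BTensor.map₁ B N3 (LinearMap.ker f).subtype) := by
      rw [rexact₁ B f hf]; exact h1
    obtain ⟨a, ha⟩ := hmem
    have h2 : BTensor.map₁ B N4 (LinearMap.ker f).subtype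
        (BTensor.map₂ B (↥(LinearMap.ker f)) d3 a) = 0 := by
      rw [← map_comm, ha, ← map₂_comp, h320, map₂_zero]
    have h3 : BTensor.map₂ B (↥(LinearMap.ker f)) d3 a = 0 :=
      flat_inj₁ B hproj4 (LinearMap.ker f).subtype (Submodule.injective_subtype _)
        (h2.trans (map_zero _).symm)
    have hmem2 : a ∈ LinearMap.range (BTensor.map₂ B (↥(LinearMap.ker f)) d2) := by
      rw [hK]; exact h3
    obtain ⟨a', ha'⟩ := hmem2
    have h4 : BTensor.map₂ B Qc d2
        (b - BTensor.map₁ B N2 (LinearMap.ker f).subtype a') = 0 := by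
      rw [map_sub, map_comm, ha', ha, sub_self]
    have hmem3 : b - BTensor.map₁ B N2 (LinearMap.ker f).subtype a' ∈
        LinearMap.range (BTensor.map₂ B Qc d1) := by
      rw [flat_exact₂ B hQ d1 d2 h21]; exact h4
    obtain ⟨b', hb'⟩ := hmem3
    refine ⟨BTensor.map₁ B N1 f b', ?_⟩
    rw [map_comm, hb', map_sub, ← map₁_comp]
    have hcomp : f.comp (LinearMap.ker f).subtype = 0 := by
      ext ⟨z, hz⟩
      simpa using hz
    rw [hcomp, map₁_zero, sub_zero]

end Chase

section GammaSide

variable (B Γ' : Type) [Ring B] [Ring Γ']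
variable {Mfix : Type} [AddCommGroup Mfix] [Module Bᵐᵒᵖ Mfix] [Module Γ' Mfix]
  [SMulCommClass Γ' Bᵐᵒᵖ Mfix]
variable {N N' : Type} [AddCommGroup N] [AddCommGroup N'] [Module B N] [Module B N']

theorem smul_def (g : Γ') (x : BTensor B Mfix N) :
    g • x = BTensor.map₁ B N (lsmulRightLinear B Γ' Mfix g) x := rfl

/-- `BTensor.map₂` as a `Γ'`-linear map. -/
def map₂Γ (f : N →ₗ[B] N') : BTensor B Mfix N →ₗ[Γ'] BTensor B Mfix N' where
  toFun := BTensor.map₂ B Mfix f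
  map_add' := map_add _
  map_smul' := fun g x => by
    simp only [RingHom.id_apply]
    rw [smul_def, smul_def, map_comm]

theorem map₂Γ_apply (f : N →ₗ[B] N') (x : BTensor B Mfix N) :
    map₂Γ B Γ' f x = BTensor.map₂ B Mfix f x := rfl

/-- The free iso `e2` as a `Γ'`-linear equivalence. -/
def e2Γ (ι : Type) : BTensor B Mfix (ι →₀ B) ≃ₗ[Γ'] (ι →₀ Mfix) :=
  AddEquiv.toLinearEquiv
    { toFun := e2 (M := Mfix) B ι
      invFun := e2inv (M := Mfix) B ι
      left_inv := e2inv_e2 B ι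
      right_inv := e2_e2inv B ι
      map_add' := map_add _ }
    (by
      intro c x
      show e2 (M := Mfix) B ι (c • x) = c • e2 (M := Mfix) B ι x
      rw [smul_def, e2_nat]
      ext i
      rw [Finsupp.mapRange_apply, Finsupp.smul_apply]
      rfl)

/-- The tensor product of a projective `Γ'`-`B`-bimodule with a projective left `B`-module
is a projective `Γ'`-module. -/
theorem projective_bt (hM : Module.Projective Γ' Mfix) (hN : Module.Projective B N) :
    Module.Projective Γ' (BTensor B Mfix N) := by
  classical
  obtain ⟨s, hs⟩ := Module.projective_def.mp hN
  haveI : ∀ _ : N, Module.Projective Γ' Mfix := fun _ => hM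
  haveI h2 : Module.Projective Γ' (N →₀ Mfix) :=
    Module.Projective.of_equiv (finsuppLequivDFinsupp (ι := N) (M := Mfix) Γ').symm
  haveI h3 : Module.Projective Γ' (BTensor B Mfix (N →₀ B)) :=
    Module.Projective.of_equiv (e2Γ B Γ' (ι := N)).symm
  refine Module.Projective.of_split (map₂Γ B Γ' s)
    (map₂Γ B Γ' (Finsupp.linearCombination B (id : N → N))) ?_
  ext x
  show BTensor.map₂ B Mfix (Finsupp.linearCombination B (id : N → N))
    (BTensor.map₂ B Mfix s x) = x
  rw [← map₂_comp]
  have : (Finsupp.linearCombination B (id : N → N)).comp s = LinearMap.id := LinearMap.ext hs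
  rw [this, map₂_id]

end GammaSide

end BTensorAux

end AuxDev

set_option maxHeartbeats 2000000 in
/-- Let `X` be a `Γ`-`Λ`-bimodule, projective as a left `Γ`-module and of
finite projective dimension as a right `Λ`-module.  If `P⬝` is an exact complex of projective
left `Λ`-modules then `X ⊗_Λ P⬝` is exact and all its terms are projective left `Γ`-modules. -/
theorem statement10 (k : Type) [Field k] (Γ Λ : Type) [Ring Γ] [Ring Λ] [Algebra k Γ] [Algebra k Λ]
    [FiniteDimensional k Γ] [FiniteDimensional k Λ]
    (X : Type) [AddCommGroup X] [Module Γ X] [Module Λᵐᵒᵖ X] [SMulCommClass Γ Λᵐᵒᵖ X]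
    (hXleft : Module.Projective Γ X) (hXright : HasFinProjDim Λᵐᵒᵖ X)
    (P : ℤ → ModuleCat.{0} Λ) (d : ∀ i, P i ⟶ P (i + 1))
    (hproj : ∀ i, Module.Projective Λ (P i))
    (hex : ∀ i, LinearMap.range (d i).hom = LinearMap.ker (d (i + 1)).hom) :
    (∀ i, LinearMap.range (BTensor.map₂ Λ X (d i).hom) =
        LinearMap.ker (BTensor.map₂ Λ X (d (i + 1)).hom)) ∧
      ∀ i, Module.Projective Γ (BTensor Λ X (P i)) := by
  constructor
  · obtain ⟨n, hn⟩ := hXright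
    have key : ∀ (n : ℕ) (Mc : Type) (_ : AddCommGroup Mc) (_ : Module Λᵐᵒᵖ Mc),
        pdLE Λᵐᵒᵖ n (ModuleCat.of Λᵐᵒᵖ Mc) → ∀ i,
          LinearMap.range (BTensor.map₂ Λ Mc (d i).hom) =
            LinearMap.ker (BTensor.map₂ Λ Mc (d (i + 1)).hom) := by
      intro n
      induction n with
      | zero =>
          intro Mc _ _ hM i
          exact BTensorAux.flat_exact₂ Λ hM (d i).hom (d (i + 1)).hom (hex i)
      | succ n IH =>
          intro Mc _ _ hM i
          obtain ⟨Q, f, hQ, hfs, hker⟩ := hM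
          exact BTensorAux.chase Λ (d i).hom (d (i + 1)).hom (d (i + 1 + 1)).hom
            (hproj (i + 1 + 1 + 1)) (hex i) (hex (i + 1)) hQ f.hom hfs
            (IH (↥(LinearMap.ker f.hom)) inferInstance inferInstance hker (i + 1))
    exact fun i => key n X inferInstance inferInstance hn i
  · intro i
    exact BTensorAux.projective_bt Λ Γ hXleft (hproj i)
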